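/- Let Γ and Γ' be connected graphs, let B be a graph with exactly one vertex, and let π : Γ → B and π' : Γ' → B be immersions (edge-labelings of Γ and Γ' over B). Let v be a vertex of Γ and v' a vertex of Γ'. Then there exists a graph morphism f : Γ → Γ' with π' ∘ f = π and f(v) = v' (such an f is automatically an immersion, and is unique) if and only if for every path p in Γ starting at v there exists a path p' in Γ' starting at v' with π'(p') = π(p) (equal images as paths in B) and such that p' is a circuit at v' whenever p is a circuit at v. -/

import Mathlib

open Quiver

namespace SerreGraphAux

variable {B : Type*} [Quiver B]

/-- Cast the label of an arrow in a one-vertex graph to the distinguished vertex. -/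
def labE (b : B) (hb : ∀ x : B, x = b) {x y : B} (e : x ⟶ y) : b ⟶ b :=
  e.cast (hb x) (hb y)

theorem labE_heq (b : B) (hb : ∀ x : B, x = b) {x y : B} (e : x ⟶ y) :
    HEq (labE b hb e) e :=
  Hom.cast_heq _ _ e

theorem labE_reverse [HasInvolutiveReverse B] (b : B) (hb : ∀ x : B, x = b)
    {x y : B} (e : x ⟶ y) :
    labE b hb (reverse e) = reverse (labE b hb e) := by
  obtain rfl := hb x
  obtain rfl := hb y
  rfl

theorem labE_inj (b : B) (hb : ∀ x : B, x = b) {x y : B} (e e' : x ⟶ y)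
    (h : labE b hb e = labE b hb e') : e = e' := by
  obtain rfl := hb x
  obtain rfl := hb y
  exact h

variable {G : Type*} [Quiver G]

/-- The label word of a path. -/
def labP (b : B) (hb : ∀ x : B, x = b) (π : G ⥤q B) :
    ∀ {u w : G}, Path u w → List (b ⟶ b)
  | _, _, Path.nil => []
  | _, _, Path.cons p e => labP b hb π p ++ [labE b hb (π.map e)]

@[simp] theorem labP_nil (b : B) (hb : ∀ x : B, x = b) (π : G ⥤q B) {u : G} :
    labP b hb π (Path.nil : Path u u) = [] := by simp [labP]

@[simp] theorem labP_cons (b : B) (hb : ∀ x : B, x = b) (π : G ⥤q B)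
    {u w x : G} (p : Path u w) (e : w ⟶ x) :
    labP b hb π (p.cons e) = labP b hb π p ++ [labE b hb (π.map e)] := by simp [labP]

theorem labP_comp (b : B) (hb : ∀ x : B, x = b) (π : G ⥤q B)
    {u w x : G} (p : Path u w) (q : Path w x) :
    labP b hb π (p.comp q) = labP b hb π p ++ labP b hb π q := by
  induction q with
  | nil => simp
  | cons q e ih => simp [Path.comp_cons, ih]

theorem labP_reverse [HasInvolutiveReverse B] [HasInvolutiveReverse G]
    (b : B) (hb : ∀ x : B, x = b) (π : G ⥤q B)
    (hπrev : ∀ ⦃a c : G⦄ (e : a ⟶ c), π.map (reverse e) = reverse (π.map e))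
    {u w : G} (p : Path u w) :
    labP b hb π p.reverse = (labP b hb π p).reverse.map (fun a => reverse a) := by
  induction p with
  | nil => simp
  | cons p e ih =>
      show labP b hb π (((reverse e).toPath).comp p.reverse) = _
      rw [labP_comp, ih]
      have : labP b hb π (reverse e).toPath = [labE b hb (π.map (reverse e))] := by
        simp [Hom.toPath]
      rw [this, hπrev, labE_reverse]
      simp


/-- Immersions are injective on stars, phrased with labels. -/
theorem star_inj_lab (b : B) (hb : ∀ x : B, x = b) (π : G ⥤q B)
    (hπ : ∀ u : G, Function.Injective (π.star u))
    {u x₁ x₂ : G} (e₁ : u ⟶ x₁) (e₂ : u ⟶ x₂)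
    (h : labE b hb (π.map e₁) = labE b hb (π.map e₂)) :
    (⟨x₁, e₁⟩ : Σ y, u ⟶ y) = ⟨x₂, e₂⟩ := by
  apply hπ u
  show (⟨π.obj x₁, π.map e₁⟩ : Σ y, π.obj u ⟶ y) = ⟨π.obj x₂, π.map e₂⟩
  have h1 : HEq (π.map e₁) (π.map e₂) :=
    ((labE_heq b hb (π.map e₁)).symm.trans (h ▸ labE_heq b hb (π.map e₂)))
  exact Sigma.ext ((hb _).trans (hb _).symm) h1

theorem labE_inj' (b : B) (hb : ∀ x : B, x = b) (π : G ⥤q B)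
    (hπ : ∀ u : G, Function.Injective (π.star u))
    {u x : G} (e₁ e₂ : u ⟶ x)
    (h : labE b hb (π.map e₁) = labE b hb (π.map e₂)) : e₁ = e₂ := by
  have := star_inj_lab b hb π hπ e₁ e₂ h
  simpa using this

/-- Uniqueness of lifts of label words through an immersion. -/
theorem lift_unique (b : B) (hb : ∀ x : B, x = b) (π : G ⥤q B)
    (hπ : ∀ u : G, Function.Injective (π.star u)) {u : G} :
    ∀ {w₁ w₂ : G} (p : Path u w₁) (q : Path u w₂),
      labP b hb π p = labP b hb π q → (⟨w₁, p⟩ : Σ w, Path u w) = ⟨w₂, q⟩ := by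
  intro w₁ w₂ p
  revert w₂
  induction p with
  | nil =>
      intro w₂ q h
      cases q with
      | nil => rfl
      | cons q e => simp at h
  | cons p e ih =>
      intro w₂ q h
      cases q with
      | nil => simp at h
      | cons q e' =>
          simp only [labP_cons] at h
          obtain ⟨h1, h2⟩ := List.append_inj' h (by simp)
          have h2' : labE b hb (π.map e) = labE b hb (π.map e') := by
            simpa using h2
          obtain ⟨hm, hpq⟩ := Sigma.ext_iff.mp (ih q h1)
          subst hm
          obtain rfl := eq_of_heq hpq
          obtain ⟨hw, he⟩ := Sigma.ext_iff.mp (star_inj_lab b hb π hπ e e' h2')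
          subst hw
          obtain rfl := eq_of_heq he
          rfl

/-- Splitting a path according to a factorization of its label word. -/
theorem lab_split (b : B) (hb : ∀ x : B, x = b) (π : G ⥤q B) :
    ∀ {u w : G} (p : Path u w) (l₁ l₂ : List (b ⟶ b)), labP b hb π p = l₁ ++ l₂ →
      ∃ (m : G) (p₁ : Path u m) (p₂ : Path m w),
        p = p₁.comp p₂ ∧ labP b hb π p₁ = l₁ ∧ labP b hb π p₂ = l₂ := by
  intro u w p
  induction p with
  | nil =>
      intro l₁ l₂ h
      rw [labP_nil] at h
      obtain ⟨rfl, rfl⟩ := List.append_eq_nil_iff.mp h.symm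
      exact ⟨_, Path.nil, Path.nil, rfl, labP_nil b hb π, labP_nil b hb π⟩
  | cons p e ih =>
      intro l₁ l₂ h
      rcases l₂.eq_nil_or_concat with rfl | ⟨l₂', x, rfl⟩
      · refine ⟨_, p.cons e, Path.nil, rfl, ?_, labP_nil b hb π⟩
        simpa using h
      · rw [List.concat_eq_append, labP_cons, ← List.append_assoc] at h
        obtain ⟨h1, h2⟩ := List.append_inj' h (by simp)
        obtain ⟨m, p₁, p₂, rfl, hl1, hl2⟩ := ih l₁ l₂' h1
        refine ⟨m, p₁, p₂.cons e, rfl, hl1, ?_⟩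
        rw [labP_cons, hl2, List.concat_eq_append]
        simpa using h2


theorem mapPath_comp_prefunctor {U V W : Type*} [Quiver U] [Quiver V] [Quiver W]
    (F : U ⥤q V) (G : V ⥤q W) {u w : U} (p : Path u w) :
    (F.comp G).mapPath p = G.mapPath (F.mapPath p) := by
  induction p with
  | nil => rfl
  | cons p e ih => simp [Prefunctor.mapPath_cons, ih]; rfl

theorem labP_eq_labB (b : B) (hb : ∀ x : B, x = b) (π : G ⥤q B)
    {u w : G} (p : Path u w) :
    labP b hb π p = labP b hb (Prefunctor.id B) (π.mapPath p) := by
  induction p with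
  | nil => simp [Prefunctor.mapPath_nil]
  | cons p e ih => simp [Prefunctor.mapPath_cons, ih]; rfl

theorem labB_heq (b : B) (hb : ∀ x : B, x = b) {x y x' y' : B}
    (p : Path x y) (q : Path x' y') (h : HEq p q) :
    labP b hb (Prefunctor.id B) p = labP b hb (Prefunctor.id B) q := by
  obtain rfl : x = x' := (hb x).trans (hb x').symm
  obtain rfl : y = y' := (hb y).trans (hb y').symm
  rw [eq_of_heq h]

theorem labP_of_heq {G' : Type*} [Quiver G'] (b : B) (hb : ∀ x : B, x = b)
    (π : G ⥤q B) (π' : G' ⥤q B) {u w : G} {u' w' : G'}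
    (p : Path u w) (p' : Path u' w')
    (h : HEq (π'.mapPath p') (π.mapPath p)) :
    labP b hb π' p' = labP b hb π p := by
  rw [labP_eq_labB b hb π' p', labP_eq_labB b hb π p]
  exact labB_heq b hb _ _ h

end SerreGraphAux


open Quiver

/-- A graph morphism between graphs in the sense of Serre (quivers with involutive
reverse) preserves the reverse operation. -/
def PreservesReverse {U V : Type*} [Quiver U] [Quiver V]
    [HasInvolutiveReverse U] [HasInvolutiveReverse V] (f : U ⥤q V) : Prop :=
  ∀ ⦃a b : U⦄ (e : a ⟶ b), f.map (reverse e) = reverse (f.map e)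

/-- A morphism of graphs is an immersion if it is injective on each star. -/
def IsImmersion {U V : Type*} [Quiver U] [Quiver V] (f : U ⥤q V) : Prop :=
  ∀ u : U, Function.Injective (f.star u)

/-- A graph is connected if any two vertices are joined by a path. -/
def IsConnectedQuiver (U : Type*) [Quiver U] : Prop :=
  ∀ u v : U, Nonempty (Path u v)

/-- The action of a prefunctor on the total set of arrows. -/
def arrowMap {U V : Type*} [Quiver U] [Quiver V] (f : U ⥤q V) :
    (Σ u w : U, u ⟶ w) → (Σ u w : V, u ⟶ w) :=
  fun a => ⟨f.obj a.1, f.obj a.2.1, f.map a.2.2⟩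

/-- Let `Γ`, `Γ'` be connected graphs edge-labeled over a one-vertex graph `B` via
immersions `π`, `π'`. There is a (label-preserving) graph morphism `f : Γ → Γ'` with
`π' ∘ f = π` sending `v` to `v'` iff every path `p` in `Γ` starting at `v` has a
companion path `p'` in `Γ'` starting at `v'` with the same label, which is a circuit
whenever `p` is a circuit. -/
theorem exists_morphism_iff_paths_lift {Γ Γ' B : Type*}
    [Quiver Γ] [Quiver Γ'] [Quiver B]
    [HasInvolutiveReverse Γ] [HasInvolutiveReverse Γ'] [HasInvolutiveReverse B]
    (hΓ : IsConnectedQuiver Γ) (hΓ' : IsConnectedQuiver Γ')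
    (hB : ∃ b : B, ∀ x : B, x = b)
    (π : Γ ⥤q B) (hπrev : PreservesReverse π) (hπ : IsImmersion π)
    (π' : Γ' ⥤q B) (hπ'rev : PreservesReverse π') (hπ' : IsImmersion π')
    (v : Γ) (v' : Γ') :
    (∃ f : Γ ⥤q Γ', PreservesReverse f ∧ f.comp π' = π ∧ f.obj v = v') ↔
      (∀ (w : Γ) (p : Path v w), ∃ (w' : Γ') (p' : Path v' w'),
        HEq (π'.mapPath p') (π.mapPath p) ∧ (w = v → w' = v')) := by
  obtain ⟨b, hb⟩ := hB
  open SerreGraphAux in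
  constructor
  · rintro ⟨f, hfrev, hcomp, hfv⟩
    intro w p
    subst hfv
    refine ⟨f.obj w, f.mapPath p, ?_, ?_⟩
    · subst hcomp
      rw [← SerreGraphAux.mapPath_comp_prefunctor f π' p]
      exact HEq.rfl
    · rintro rfl; rfl
  · intro H
    have H' : ∀ (w : Γ) (p : Path v w), ∃ (w' : Γ') (p' : Path v' w'),
        SerreGraphAux.labP b hb π' p' = SerreGraphAux.labP b hb π p ∧ (w = v → w' = v') := by
      intro w p
      obtain ⟨w', p', h1, h2⟩ := H w p
      exact ⟨w', p', SerreGraphAux.labP_of_heq b hb π π' p p' h1, h2⟩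
    have key : ∀ {w : Γ} (p₁ p₂ : Path v w) {x₁ x₂ : Γ'}
        (q₁ : Path v' x₁) (q₂ : Path v' x₂),
        SerreGraphAux.labP b hb π' q₁ = SerreGraphAux.labP b hb π p₁ →
        SerreGraphAux.labP b hb π' q₂ = SerreGraphAux.labP b hb π p₂ → x₁ = x₂ := by
      intro w p₁ p₂ x₁ x₂ q₁ q₂ hq₁ hq₂
      obtain ⟨y, c', hc, hcirc⟩ := H' v (p₁.comp p₂.reverse)
      obtain rfl := hcirc rfl
      rw [SerreGraphAux.labP_comp] at hc
      obtain ⟨m, a, d, rfl, ha, hd⟩ := SerreGraphAux.lab_split b hb π' c' _ _ hc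
      have h1 : m = x₁ :=
        (Sigma.ext_iff.mp (SerreGraphAux.lift_unique b hb π' hπ' a q₁
          (ha.trans hq₁.symm))).1
      have hdrev : SerreGraphAux.labP b hb π' d.reverse = SerreGraphAux.labP b hb π p₂ := by
        rw [SerreGraphAux.labP_reverse b hb π' hπ'rev, hd,
          SerreGraphAux.labP_reverse b hb π hπrev]
        simp [List.map_reverse, List.map_map, Function.comp_def]
      have h2 : m = x₂ :=
        (Sigma.ext_iff.mp (SerreGraphAux.lift_unique b hb π' hπ' d.reverse q₂
          (hdrev.trans hq₂.symm))).1
      exact h1.symm.trans h2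
    have pw : ∀ w : Γ, Path v w := fun w => (hΓ v w).some
    choose fobj lift hlab hcircuit using fun w : Γ => H' w (pw w)
    have uni : ∀ {w : Γ} (p : Path v w) {x : Γ'} (q : Path v' x),
        SerreGraphAux.labP b hb π' q = SerreGraphAux.labP b hb π p → x = fobj w := by
      intro w p x q hq
      exact key p (pw w) q (lift w) hq (hlab w)
    have fmapEx : ∀ {u w : Γ} (e : u ⟶ w), ∃ e' : fobj u ⟶ fobj w,
        SerreGraphAux.labE b hb (π'.map e') = SerreGraphAux.labE b hb (π.map e) := by
      intro u w e
      obtain ⟨x, q, hq, -⟩ := H' w ((pw u).cons e)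
      cases q with
      | nil =>
          rw [SerreGraphAux.labP_nil, SerreGraphAux.labP_cons] at hq
          exact absurd hq (by simp)
      | cons q₀ e₀ =>
          have hx : x = fobj w := uni ((pw u).cons e) (q₀.cons e₀) hq
          rw [SerreGraphAux.labP_cons, SerreGraphAux.labP_cons] at hq
          obtain ⟨ha1, ha2⟩ := List.append_inj' hq (by simp)
          have hm : _ = fobj u := uni (pw u) q₀ ha1
          subst hm
          subst hx
          exact ⟨e₀, by simpa using ha2⟩
    have hflab : ∀ {a c : Γ} (e : a ⟶ c),
        SerreGraphAux.labE b hb (π'.map ((fmapEx e).choose)) =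
          SerreGraphAux.labE b hb (π.map e) := fun e => (fmapEx e).choose_spec
    refine ⟨⟨fobj, fun {a c} e => (fmapEx e).choose⟩, ?_, ?_, hcircuit v rfl⟩
    · intro a c e
      show (fmapEx (reverse e)).choose = reverse ((fmapEx e).choose)
      apply SerreGraphAux.labE_inj' b hb π' hπ'
      rw [hflab, hπrev, SerreGraphAux.labE_reverse, hπ'rev, SerreGraphAux.labE_reverse, hflab]
    · apply Prefunctor.ext (fun X => (hb _).trans (hb _).symm)
      intro X Y e
      apply eq_of_heq
      have hHEq : HEq (π'.map ((fmapEx e).choose)) (π.map e) :=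
        (SerreGraphAux.labE_heq b hb _).symm.trans
          ((heq_of_eq (hflab e)).trans (SerreGraphAux.labE_heq b hb _))
      refine HEq.trans ?_ ((eqRec_heq _ _).symm)
      refine HEq.trans ?_ ((eqRec_heq (φ := fun x => x ⟶ π.obj Y) _ _).symm)
      exact hHEq
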